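/- Any policy that is greedy with respect to the backward-induction optimal Q-function is optimal: if a policy π satisfies, for every state s and every l < τ, that π s l maximizes a ↦ Q l s a over A, then for every l ≤ τ and every state s, V_π l s = max_{a ∈ A} Q l s a (for l < τ) and V_π l s ≥ V_{π'} l s for every policy π'. -/

import Mathlib

/-- Any policy that is greedy with respect to the backward-induction optimal Q-function is
optimal: if `π s l` maximizes `a ↦ Q l s a` over `A` for every state `s` and every `l < τ`,
then for every `l ≤ τ` and every state `s`, `V π l s = max_{a ∈ A} Q l s a` (for `l < τ`) and
`V π l s ≥ V π' l s` for every policy `π'`. -/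
theorem greedy_policy_is_optimal
    {S A : Type*} [Fintype S] [Nonempty S] [Fintype A] [Nonempty A]
    (p : S → A → S → ℝ)
    (hp_nonneg : ∀ s a s', 0 ≤ p s a s')
    (hp_sum : ∀ s a, ∑ s', p s a s' = 1)
    (r : S → A → S → ℝ)
    (hr : ∀ s a s', 0 ≤ r s a s' ∧ r s a s' ≤ 1)
    (γ : ℝ) (hγ0 : 0 ≤ γ) (hγ1 : γ < 1) (τ : ℕ)
    (V : (S → ℕ → A) → ℕ → S → ℝ)
    (hV_ge : ∀ (π : S → ℕ → A) (l : ℕ) (s : S), τ ≤ l → V π l s = 0)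
    (hV_lt : ∀ (π : S → ℕ → A) (l : ℕ) (s : S), l < τ →
      V π l s = ∑ s', p s (π s l) s' * (r s (π s l) s' + γ * V π (l + 1) s'))
    (Q : ℕ → S → A → ℝ)
    (hQ_ge : ∀ (l : ℕ) (s : S) (a : A), τ ≤ l → Q l s a = 0)
    (hQ_lt : ∀ (l : ℕ) (s : S) (a : A), l < τ →
      Q l s a = ∑ s', p s a s' *
        (r s a s' + γ * Finset.univ.sup' Finset.univ_nonempty (fun a' => Q (l + 1) s' a')))
    (π : S → ℕ → A)
    (hgreedy : ∀ (s : S) (l : ℕ), l < τ → ∀ a : A, Q l s a ≤ Q l s (π s l)) :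
    ∀ l : ℕ, l ≤ τ → ∀ s : S,
      (l < τ → V π l s = Finset.univ.sup' Finset.univ_nonempty (fun a => Q l s a)) ∧
      (∀ π' : S → ℕ → A, V π l s ≥ V π' l s) := by
  intro l hl
  induction' hn : τ - l with n ih generalizing l
  · -- l = τ
    have hlτ : l = τ := le_antisymm hl (Nat.le_of_sub_eq_zero hn)
    intro s
    constructor
    · intro hlt; omega
    · intro π'
      rw [hV_ge π l s (le_of_eq hlτ.symm), hV_ge π' l s (le_of_eq hlτ.symm)]
  · intro s
    have hlt : l < τ := by omega
    have hl1 : l + 1 ≤ τ := hlt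
    have ihs := ih (l + 1) hl1 (by omega)
    -- V π (l+1) s' = sup Q (l+1) s'
    have hVsup : ∀ s', V π (l + 1) s' =
        Finset.univ.sup' Finset.univ_nonempty (fun a => Q (l + 1) s' a) := by
      intro s'
      rcases lt_or_ge (l + 1) τ with h | h
      · exact (ihs s').1 h
      · rw [hV_ge π (l + 1) s' h]
        symm
        apply le_antisymm
        · apply Finset.sup'_le
          intro a _
          rw [hQ_ge (l + 1) s' a h]
        · obtain ⟨a⟩ := ‹Nonempty A›
          have := Finset.le_sup' (fun a => Q (l + 1) s' a) (Finset.mem_univ a)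
          rw [hQ_ge (l + 1) s' a h] at this
          exact this
    have hVQ : ∀ a : A, (∑ s', p s a s' * (r s a s' + γ * V π (l + 1) s')) = Q l s a := by
      intro a
      rw [hQ_lt l s a hlt]
      exact Finset.sum_congr rfl fun s' _ => by rw [hVsup s']
    have hVeq : V π l s = Q l s (π s l) := by
      rw [hV_lt π l s hlt, hVQ]
    have hsup : Finset.univ.sup' Finset.univ_nonempty (fun a => Q l s a) = Q l s (π s l) := by
      apply le_antisymm
      · exact Finset.sup'_le _ _ fun a _ => hgreedy s l hlt a
      · exact Finset.le_sup' _ (Finset.mem_univ _)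
    refine ⟨fun _ => by rw [hVeq, hsup], fun π' => ?_⟩
    rw [hV_lt π' l s hlt, hVeq]
    calc ∑ s', p s (π' s l) s' * (r s (π' s l) s' + γ * V π' (l + 1) s')
        ≤ ∑ s', p s (π' s l) s' * (r s (π' s l) s' + γ * V π (l + 1) s') := by
          apply Finset.sum_le_sum
          intro s' _
          apply mul_le_mul_of_nonneg_left _ (hp_nonneg _ _ _)
          apply add_le_add_right
          exact mul_le_mul_of_nonneg_left ((ihs s').2 π') hγ0
      _ = Q l s (π' s l) := hVQ _
      _ ≤ Q l s (π s l) := hgreedy s l hlt _
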